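/- The map # : Ω¹(M) → Vect(M) is a Lie algebra homomorphism: #[α,β] = [#α, #β] for all 1-forms α, β on a Poisson manifold. -/

import Mathlib

/-- Partial derivative of a function on `ℝⁿ` in the `k`-th coordinate direction. -/
noncomputable def pd {n : ℕ} (k : Fin n) (f : (Fin n → ℝ) → ℝ) (x : Fin n → ℝ) : ℝ :=
  fderiv ℝ f x (Pi.single k 1)

/-- Components of the vector field `#α`: `(#α)^s = α_i π^{is}`. -/
noncomputable def sharp {n : ℕ} (π : Fin n → Fin n → (Fin n → ℝ) → ℝ)
    (α : Fin n → (Fin n → ℝ) → ℝ) (s : Fin n) (x : Fin n → ℝ) : ℝ :=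
  ∑ i, α i x * π i s x

/-- Components of the Lie derivative of a 1-form `β` along a vector field `X`. -/
noncomputable def lieDer {n : ℕ} (X : Fin n → (Fin n → ℝ) → ℝ)
    (β : Fin n → (Fin n → ℝ) → ℝ) (k : Fin n) (x : Fin n → ℝ) : ℝ :=
  ∑ s, X s x * pd s (β k) x + ∑ s, β s x * pd k (X s) x

/-- Components of the Koszul bracket of 1-forms. -/
noncomputable def koszul {n : ℕ} (π : Fin n → Fin n → (Fin n → ℝ) → ℝ)
    (α β : Fin n → (Fin n → ℝ) → ℝ) (k : Fin n) (x : Fin n → ℝ) : ℝ :=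
  lieDer (sharp π α) β k x - lieDer (sharp π β) α k x
    - pd k (fun y => ∑ i, ∑ j, π i j y * α i y * β j y) x

/-! ### Auxiliary analytic lemmas -/

lemma pd_sum {n m : ℕ} (f : Fin m → (Fin n → ℝ) → ℝ) (k : Fin n) (x : Fin n → ℝ)
    (h : ∀ i, DifferentiableAt ℝ (f i) x) :
    pd k (fun y => ∑ i, f i y) x = ∑ i, pd k (f i) x := by
  unfold pd
  rw [fderiv_fun_sum (fun i _ => h i)]
  simp

lemma pd_mul {n : ℕ} (f g : (Fin n → ℝ) → ℝ) (k : Fin n) (x : Fin n → ℝ)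
    (hf : DifferentiableAt ℝ f x) (hg : DifferentiableAt ℝ g x) :
    pd k (fun y => f y * g y) x = pd k f x * g x + f x * pd k g x := by
  unfold pd
  rw [fderiv_fun_mul hf hg]
  simp
  ring

lemma diffAt {n : ℕ} {f : (Fin n → ℝ) → ℝ} (hf : ContDiff ℝ (⊤ : ℕ∞) f) (x : Fin n → ℝ) :
    DifferentiableAt ℝ f x := (hf.differentiable (by simp)).differentiableAt

lemma pd_sharp {n : ℕ} (π : Fin n → Fin n → (Fin n → ℝ) → ℝ) (α : Fin n → (Fin n → ℝ) → ℝ)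
    (hπ : ∀ i j, ContDiff ℝ (⊤ : ℕ∞) (π i j)) (hα : ∀ i, ContDiff ℝ (⊤ : ℕ∞) (α i))
    (s k : Fin n) (x : Fin n → ℝ) :
    pd s (sharp π α k) x
      = ∑ i, (pd s (α i) x * π i k x + α i x * pd s (π i k) x) := by
  rw [show sharp π α k = fun y => ∑ i, α i y * π i k y from rfl]
  rw [pd_sum _ _ _ (fun i => (diffAt (hα i) x).fun_mul (diffAt (hπ i k) x))]
  exact Finset.sum_congr rfl fun i _ => pd_mul _ _ _ _ (diffAt (hα i) x) (diffAt (hπ i k) x)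

lemma pd_triple {n : ℕ} (π : Fin n → Fin n → (Fin n → ℝ) → ℝ) (α β : Fin n → (Fin n → ℝ) → ℝ)
    (hπ : ∀ i j, ContDiff ℝ (⊤ : ℕ∞) (π i j)) (hα : ∀ i, ContDiff ℝ (⊤ : ℕ∞) (α i))
    (hβ : ∀ i, ContDiff ℝ (⊤ : ℕ∞) (β i)) (k : Fin n) (x : Fin n → ℝ) :
    pd k (fun y => ∑ i, ∑ j, π i j y * α i y * β j y) x
      = ∑ i, ∑ j, ((pd k (π i j) x * α i x + π i j x * pd k (α i) x) * β j x
          + π i j x * α i x * pd k (β j) x) := by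
  have hd : ∀ i j : Fin n, DifferentiableAt ℝ (fun y => π i j y * α i y) x :=
    fun i j => (diffAt (hπ i j) x).mul (diffAt (hα i) x)
  have hd2 : ∀ i j : Fin n, DifferentiableAt ℝ (fun y => π i j y * α i y * β j y) x :=
    fun i j => (hd i j).mul (diffAt (hβ j) x)
  have hd3 : ∀ i : Fin n, DifferentiableAt ℝ (fun y => ∑ j, π i j y * α i y * β j y) x :=
    fun i => DifferentiableAt.fun_sum (fun j _ => hd2 i j)
  rw [pd_sum _ _ _ hd3]
  refine Finset.sum_congr rfl fun i _ => ?_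
  rw [pd_sum _ _ _ (hd2 i)]
  refine Finset.sum_congr rfl fun j _ => ?_
  rw [pd_mul _ _ _ _ (hd i j) (diffAt (hβ j) x),
      pd_mul _ _ _ _ (diffAt (hπ i j) x) (diffAt (hα i) x)]

/-! ### Auxiliary algebraic lemmas -/

lemma sum_rot {M : Type*} [AddCommMonoid M] {n : ℕ} (f : Fin n → Fin n → Fin n → M) :
    ∑ x : Fin n, ∑ y : Fin n, ∑ z : Fin n, f x y z
      = ∑ z : Fin n, ∑ y : Fin n, ∑ x : Fin n, f x y z := by
  calc ∑ x : Fin n, ∑ y : Fin n, ∑ z : Fin n, f x y z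
      = ∑ y : Fin n, ∑ x : Fin n, ∑ z : Fin n, f x y z := Finset.sum_comm
    _ = ∑ y : Fin n, ∑ z : Fin n, ∑ x : Fin n, f x y z :=
        Finset.sum_congr rfl fun y _ => Finset.sum_comm
    _ = ∑ z : Fin n, ∑ y : Fin n, ∑ x : Fin n, f x y z := Finset.sum_comm

lemma koszul_alg (n : ℕ) (k : Fin n) (a b : Fin n → ℝ) (p : Fin n → Fin n → ℝ)
    (da db : Fin n → Fin n → ℝ) (dp : Fin n → Fin n → Fin n → ℝ)
    (hp : ∀ i j, p i j = -p j i) (hdp : ∀ s i j, dp s i j = -dp s j i)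
    (hJ : ∀ i j, ∑ s, (p i s * dp s j k + p j s * dp s k i + p k s * dp s i j) = 0) :
    ∑ j, (∑ s, (∑ i, a i * p i s) * db s j
        + ∑ s, b s * ∑ i, (da j i * p i s + a i * dp j i s)
        - (∑ s, (∑ i, b i * p i s) * da s j
          + ∑ s, a s * ∑ i, (db j i * p i s + b i * dp j i s))
        - ∑ i, ∑ l, ((dp j i l * a i + p i l * da j i) * b l + p i l * a i * db j l)) * p j k
    = ∑ s, (∑ i, a i * p i s) * ∑ j, (db s j * p j k + b j * dp s j k)
    - ∑ s, (∑ i, b i * p i s) * ∑ j, (da s j * p j k + a j * dp s j k) := by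
  simp only [Finset.mul_sum, Finset.sum_mul, mul_add, add_mul, sub_mul, mul_sub,
    Finset.sum_add_distrib, Finset.sum_sub_distrib]
  -- key per-pair consequence of the Jacobi identity
  have key : ∀ i j : Fin n,
      ∑ s, (b j * (a i * dp s i j) * p s k - a i * p i s * (b j * dp s j k)
            + b j * p j s * (a i * dp s i k)) = 0 := by
    intro i j
    calc ∑ s, (b j * (a i * dp s i j) * p s k - a i * p i s * (b j * dp s j k)
            + b j * p j s * (a i * dp s i k))
        = ∑ s, (-(a i * b j)
            * (p i s * dp s j k + p j s * dp s k i + p k s * dp s i j)) :=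
          Finset.sum_congr rfl fun s _ => by rw [hdp s k i, hp k s]; ring
      _ = -(a i * b j) * ∑ s, (p i s * dp s j k + p j s * dp s k i + p k s * dp s i j) := by
          rw [Finset.mul_sum]
      _ = 0 := by rw [hJ i j]; ring
  have e1 : ∑ x : Fin n, ∑ x_1 : Fin n, ∑ i : Fin n, a i * p i x * (db x x_1 * p x_1 k)
      = ∑ x : Fin n, ∑ x_1 : Fin n, ∑ i : Fin n, a i * p i x_1 * db x_1 x * p x k := by
    rw [Finset.sum_comm]
    exact Finset.sum_congr rfl fun _ _ => Finset.sum_congr rfl fun _ _ =>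
      Finset.sum_congr rfl fun _ _ => by ring
  have e3 : ∑ x : Fin n, ∑ x_1 : Fin n, ∑ i : Fin n, b i * p i x * (da x x_1 * p x_1 k)
      = ∑ x : Fin n, ∑ x_1 : Fin n, ∑ i : Fin n, b i * p i x_1 * da x_1 x * p x k := by
    rw [Finset.sum_comm]
    exact Finset.sum_congr rfl fun _ _ => Finset.sum_congr rfl fun _ _ =>
      Finset.sum_congr rfl fun _ _ => by ring
  have e2 : ∑ x : Fin n, ∑ x_1 : Fin n, ∑ i : Fin n, p x_1 i * da x x_1 * b i * p x k
      = ∑ x : Fin n, ∑ x_1 : Fin n, ∑ i : Fin n, b x_1 * (da x i * p i x_1) * p x k := by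
    refine Finset.sum_congr rfl fun x _ => ?_
    rw [Finset.sum_comm]
    exact Finset.sum_congr rfl fun _ _ => Finset.sum_congr rfl fun _ _ => by ring
  have e5 : ∑ x : Fin n, ∑ x_1 : Fin n, ∑ i : Fin n, p x_1 i * a x_1 * db x i * p x k
      = -∑ x : Fin n, ∑ x_1 : Fin n, ∑ i : Fin n, a x_1 * (db x i * p i x_1) * p x k := by
    simp only [← Finset.sum_neg_distrib]
    exact Finset.sum_congr rfl fun x _ => Finset.sum_congr rfl fun x_1 _ =>
      Finset.sum_congr rfl fun i _ => by rw [hp x_1 i]; ring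
  have e6 : ∑ x : Fin n, ∑ x_1 : Fin n, ∑ i : Fin n, a x_1 * (b i * dp x i x_1) * p x k
      = -∑ x : Fin n, ∑ x_1 : Fin n, ∑ i : Fin n, b x_1 * (a i * dp x i x_1) * p x k := by
    simp only [← Finset.sum_neg_distrib]
    refine Finset.sum_congr rfl fun x _ => ?_
    rw [Finset.sum_comm]
    exact Finset.sum_congr rfl fun u _ => Finset.sum_congr rfl fun v _ => by
      rw [hdp x u v]; ring
  have e7 : ∑ x : Fin n, ∑ x_1 : Fin n, ∑ i : Fin n, dp x x_1 i * a x_1 * b i * p x k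
      = ∑ x : Fin n, ∑ x_1 : Fin n, ∑ i : Fin n, b x_1 * (a i * dp x i x_1) * p x k := by
    refine Finset.sum_congr rfl fun x _ => ?_
    rw [Finset.sum_comm]
    exact Finset.sum_congr rfl fun _ _ => Finset.sum_congr rfl fun _ _ => by ring
  have r3 : ∑ x : Fin n, ∑ x_1 : Fin n, ∑ i : Fin n, b x_1 * (a i * dp x i x_1) * p x k
      = ∑ i : Fin n, ∑ j : Fin n, ∑ s : Fin n, b j * (a i * dp s i j) * p s k :=
    sum_rot _
  have r2 : ∑ x : Fin n, ∑ x_1 : Fin n, ∑ i : Fin n, a i * p i x * (b x_1 * dp x x_1 k)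
      = ∑ i : Fin n, ∑ j : Fin n, ∑ s : Fin n, a i * p i s * (b j * dp s j k) :=
    sum_rot _
  have r4 : ∑ x : Fin n, ∑ x_1 : Fin n, ∑ i : Fin n, b i * p i x * (a x_1 * dp x x_1 k)
      = ∑ i : Fin n, ∑ j : Fin n, ∑ s : Fin n, b j * p j s * (a i * dp s i k) := by
    rw [sum_rot]
    exact Finset.sum_comm
  have eXYZ : ∑ i : Fin n, ∑ j : Fin n, ∑ s : Fin n, b j * (a i * dp s i j) * p s k
      = ∑ i : Fin n, ∑ j : Fin n, ∑ s : Fin n, a i * p i s * (b j * dp s j k)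
        - ∑ i : Fin n, ∑ j : Fin n, ∑ s : Fin n, b j * p j s * (a i * dp s i k) := by
    rw [← Finset.sum_sub_distrib]
    refine Finset.sum_congr rfl fun i _ => ?_
    rw [← Finset.sum_sub_distrib]
    refine Finset.sum_congr rfl fun j _ => ?_
    have h0 := key i j
    rw [Finset.sum_add_distrib, Finset.sum_sub_distrib] at h0
    linarith
  linarith [e1, e2, e3, e5, e6, e7, r3, r2, r4, eXYZ]

/-- `#` is a Lie algebra homomorphism from 1-forms (with the Koszul bracket) to vector
fields: `#[α,β] = [#α, #β]`. -/
theorem sharp_lie_algebra_hom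
    (n : ℕ) (π : Fin n → Fin n → (Fin n → ℝ) → ℝ)
    (hπ : ∀ i j, ContDiff ℝ (⊤ : ℕ∞) (π i j))
    (hanti : ∀ i j (x : Fin n → ℝ), π i j x = -π j i x)
    (hJac : ∀ i j l (x : Fin n → ℝ),
      ∑ s, (π i s x * pd s (π j l) x + π j s x * pd s (π l i) x
            + π l s x * pd s (π i j) x) = 0)
    (α β : Fin n → (Fin n → ℝ) → ℝ)
    (hα : ∀ i, ContDiff ℝ (⊤ : ℕ∞) (α i)) (hβ : ∀ i, ContDiff ℝ (⊤ : ℕ∞) (β i)) :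
    ∀ k (x : Fin n → ℝ),
      sharp π (fun j => koszul π α β j) k x
        = ∑ s, sharp π α s x * pd s (sharp π β k) x
          - ∑ s, sharp π β s x * pd s (sharp π α k) x := by
  intro k x
  have hdp : ∀ s i j : Fin n, pd s (π i j) x = -pd s (π j i) x := by
    intro s i j
    have h : π i j = fun y => -π j i y := funext fun y => hanti i j y
    rw [h]
    unfold pd
    rw [fderiv_fun_neg]
    simp
  simp only [sharp, koszul, lieDer,
    pd_sharp π α hπ hα, pd_sharp π β hπ hβ, pd_triple π α β hπ hα hβ]
  exact koszul_alg n k (fun i => α i x) (fun i => β i x) (fun i j => π i j x)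
    (fun s i => pd s (α i) x) (fun s i => pd s (β i) x) (fun s i j => pd s (π i j) x)
    (fun i j => hanti i j x) hdp (fun i j => hJac i j k x)
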